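/- Let A be a commutative ring and M, N finitely generated free A-modules equipped with decreasing filtrations by direct summands M^i, N^i (with M^i = M for i << 0 and M^i = 0 for i >> 0, same for N). Define a filtration on Hom_A(M,N) by Hom_A(M,N)^i = {f : f(M^j) ⊆ N^{j+i} for all j}. Then the canonical A-module map ψ : M^∨ ⊗_A N -> Hom_A(M,N) (where M^∨ = Hom_A(M,A) carries the dual filtration (M^∨)^i = {f : f(M^k) ⊆ A^{i+k}} with A^j = A for j ≤ 0 and A^j = 0 for j > 0) satisfies ψ((M^∨ ⊗ N)^n) = Hom_A(M,N)^n for all n, where (M^∨ ⊗ N)^n = Σ_{i+j=n} (M^∨)^i ⊗_A N^j. -/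

import Mathlib

open TensorProduct

/-- Let `M, N` be finitely generated free `A`-modules with decreasing exhaustive and
separated filtrations by direct summands.  Equip `Hom_A(M,N)` with the filtration
`Hom_A(M,N)^n = {f | f(M^j) ⊆ N^{j+n}}`, `M^∨ = Hom_A(M,A)` with the dual filtration
`(M^∨)^i = {f | f(M^k) ⊆ A^{i+k}}` (where `A^j = A` for `j ≤ 0` and `A^j = 0` for
`j > 0`), and `M^∨ ⊗_A N` with the tensor product filtration
`(M^∨ ⊗ N)^n = Σ_{i+j=n} (M^∨)^i ⊗ N^j`.  Then the canonical map
`ψ : M^∨ ⊗_A N → Hom_A(M,N)` satisfies `ψ((M^∨ ⊗ N)^n) = Hom_A(M,N)^n` for all `n`. -/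
theorem stmt16 (A : Type*) [CommRing A]
    (M N : Type*) [AddCommGroup M] [Module A M] [AddCommGroup N] [Module A N]
    [Module.Free A M] [Module.Finite A M] [Module.Free A N] [Module.Finite A N]
    (FM : ℤ → Submodule A M) (FN : ℤ → Submodule A N)
    (hFM : Antitone FM) (hFN : Antitone FN)
    (hFMc : ∀ i, ∃ C, IsCompl (FM i) C) (hFNc : ∀ i, ∃ C, IsCompl (FN i) C)
    (hFMex : ∃ k : ℤ, ∀ i ≤ k, FM i = ⊤) (hFMsep : ∃ l : ℤ, ∀ i, l ≤ i → FM i = ⊥)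
    (hFNex : ∃ k : ℤ, ∀ i ≤ k, FN i = ⊤) (hFNsep : ∃ l : ℤ, ∀ i, l ≤ i → FN i = ⊥) :
    ∀ n : ℤ,
      (Submodule.map (dualTensorHom A M N)
        (⨆ i : ℤ, Submodule.span A
          {x : Module.Dual A M ⊗[A] N | ∃ f : Module.Dual A M,
            (∀ (k : ℤ), ∀ m ∈ FM k, 0 < i + k → f m = 0)
              ∧ ∃ w ∈ FN (n - i), x = f ⊗ₜ[A] w}) : Set (M →ₗ[A] N))
      = {f : M →ₗ[A] N | ∀ j : ℤ, ∀ m ∈ FM j, f m ∈ FN (j + n)} := by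
  intro n
  set ψ := dualTensorHom A M N with hψ
  set S : Submodule A (Module.Dual A M ⊗[A] N) :=
    (⨆ i : ℤ, Submodule.span A
      {x : Module.Dual A M ⊗[A] N | ∃ f : Module.Dual A M,
        (∀ (k : ℤ), ∀ m ∈ FM k, 0 < i + k → f m = 0)
          ∧ ∃ w ∈ FN (n - i), x = f ⊗ₜ[A] w}) with hS
  -- Key one-step lemma: a map vanishing on `FM (j+1)` with values in `FN (j+n)` lies
  -- in the image of `S`.
  have step : ∀ (j : ℤ) (h : M →ₗ[A] N), (∀ m ∈ FM (j + 1), h m = 0) →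
      (∀ m : M, h m ∈ FN (j + n)) → h ∈ Submodule.map ψ S := by
    intro j h hker him
    obtain ⟨C, hC⟩ := hFMc (j + 1)
    set r : M →ₗ[A] M := C.subtype ∘ₗ (C.projectionOnto (FM (j + 1)) hC.symm) with hr
    have hsub : ∀ m : M, m - r m ∈ FM (j + 1) := by
      intro m
      have h0 := Submodule.projection_add_projection_eq_self hC m
      have h1 : m - r m = ((FM (j + 1)).projectionOnto C hC m : M) := by
        simp only [r, LinearMap.coe_comp, Function.comp_apply, Submodule.coe_subtype]
        rw [sub_eq_iff_eq_add]; exact h0.symm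
      rw [h1]; exact Submodule.coe_mem _
    have hrzero : ∀ m ∈ FM (j + 1), r m = 0 := by
      intro m hm
      simp only [r, LinearMap.coe_comp, Function.comp_apply, Submodule.coe_subtype]
      rw [Submodule.projectionOnto_apply_of_mem_right hC.symm hm]
      simp
    have hhr : ∀ m : M, h (r m) = h m := by
      intro m
      have h0 : h (m - r m) = 0 := hker _ (hsub m)
      rw [map_sub, sub_eq_zero] at h0
      exact h0.symm
    set b := Module.Free.chooseBasis A M with hb
    set y : Module.Dual A M ⊗[A] N :=
      ∑ α : Module.Free.ChooseBasisIndex A M, (b.coord α ∘ₗ r) ⊗ₜ[A] h (b α) with hy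
    have hyS : y ∈ S := by
      apply Submodule.sum_mem
      intro α _
      have : ((b.coord α ∘ₗ r) ⊗ₜ[A] h (b α) : Module.Dual A M ⊗[A] N) ∈
          Submodule.span A
            {x : Module.Dual A M ⊗[A] N | ∃ f : Module.Dual A M,
              (∀ (k : ℤ), ∀ m ∈ FM k, 0 < (-j) + k → f m = 0)
                ∧ ∃ w ∈ FN (n - (-j)), x = f ⊗ₜ[A] w} := by
        apply Submodule.subset_span
        refine ⟨b.coord α ∘ₗ r, ?_, h (b α), ?_, rfl⟩
        · intro k m hm hk
          have hm' : m ∈ FM (j + 1) := hFM (by omega) hm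
          simp [hrzero m hm']
        · have := him (b α)
          have heq : n - (-j) = j + n := by ring
          rw [heq]; exact this
      exact Submodule.mem_iSup_of_mem (-j) this
    refine ⟨y, hyS, ?_⟩
    ext m
    have key : ψ y m = ∑ α : Module.Free.ChooseBasisIndex A M,
        b.repr (r m) α • h (b α) := by
      simp [y, hψ, map_sum, LinearMap.sum_apply, dualTensorHom_apply, Module.Basis.coord_apply]
    rw [key]
    calc ∑ α, b.repr (r m) α • h (b α)
        = h (∑ α, b.repr (r m) α • b α) := by rw [map_sum]; simp [map_smul]
      _ = h (r m) := by rw [b.sum_repr]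
      _ = h m := hhr m
  -- The target filtration as a submodule.
  set H : Submodule A (M →ₗ[A] N) :=
    { carrier := {f : M →ₗ[A] N | ∀ j : ℤ, ∀ m ∈ FM j, f m ∈ FN (j + n)}
      add_mem' := fun hf hg j m hm => by
        simpa using add_mem (hf j m hm) (hg j m hm)
      zero_mem' := fun j m hm => by simp
      smul_mem' := fun c f hf j m hm => by
        simpa using Submodule.smul_mem _ c (hf j m hm) } with hH
  obtain ⟨k, hk⟩ := hFMex
  obtain ⟨l, hl⟩ := hFMsep
  -- Main induction: any `f ∈ H` vanishing on `FM (k + t)` lies in the image.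
  have main : ∀ t : ℕ, ∀ f : M →ₗ[A] N, f ∈ H → (∀ m ∈ FM (k + t), f m = 0) →
      f ∈ Submodule.map ψ S := by
    intro t
    induction t with
    | zero =>
      intro f _ hvan
      have : f = 0 := by
        ext m
        refine hvan m ?_
        have hkk : FM (k + ((0 : ℕ) : ℤ)) = ⊤ := hk _ (by simp)
        rw [hkk]; trivial
      rw [this]; exact Submodule.zero_mem _
    | succ t ih =>
      intro f hf hvan
      set j : ℤ := k + t with hj
      obtain ⟨C', hC'⟩ := hFMc j
      set p : M →ₗ[A] M := (FM j).subtype ∘ₗ ((FM j).projectionOnto C' hC') with hp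
      have hpmem : ∀ m : M, p m ∈ FM j := fun m => Submodule.coe_mem _
      have hpfix : ∀ m ∈ FM j, p m = m := by
        intro m hm
        simp only [p, LinearMap.coe_comp, Function.comp_apply, Submodule.coe_subtype]
        rw [show ((FM j).projectionOnto C' hC') m
            = ((FM j).projectionOnto C' hC') (⟨m, hm⟩ : FM j) from rfl,
          Submodule.projectionOnto_apply_left hC']
      have h1mem : f ∘ₗ p ∈ Submodule.map ψ S := by
        apply step j
        · intro m hm
          have hm' : m ∈ FM j := hFM (by omega) hm
          simp only [LinearMap.coe_comp, Function.comp_apply]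
          rw [hpfix m hm']
          apply hvan
          push_cast
          rw [show k + ((t : ℤ) + 1) = j + 1 by omega]
          exact hm
        · intro m
          exact hf j (p m) (hpmem m)
      have h2H : f - f ∘ₗ p ∈ H := by
        show ∀ j' : ℤ, ∀ m ∈ FM j', (f - f ∘ₗ p) m ∈ FN (j' + n)
        intro j' m hm
        by_cases hjj : j' ≤ j
        · have h1 : f m ∈ FN (j' + n) := hf j' m hm
          have h2 : f (p m) ∈ FN (j' + n) :=
            hFN (by omega) (hf j (p m) (hpmem m))
          simpa using sub_mem h1 h2
        · have hm' : m ∈ FM j := hFM (by omega) hm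
          simp only [LinearMap.sub_apply, LinearMap.coe_comp, Function.comp_apply]
          rw [hpfix m hm']
          simp
      have h2van : ∀ m ∈ FM (k + t), (f - f ∘ₗ p) m = 0 := by
        intro m hm
        simp only [LinearMap.sub_apply, LinearMap.coe_comp, Function.comp_apply]
        rw [hpfix m hm]
        simp
      have h2mem : f - f ∘ₗ p ∈ Submodule.map ψ S := ih _ h2H h2van
      have : f = f ∘ₗ p + (f - f ∘ₗ p) := by abel
      rw [this]
      exact Submodule.add_mem _ h1mem h2mem
  -- Now prove the set equality.
  ext f
  constructor
  · rintro ⟨y, hyS, rfl⟩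
    -- forward inclusion: `S ≤ H.comap ψ`.
    have hle : S ≤ H.comap ψ := by
      rw [hS]
      apply iSup_le
      intro i
      rw [Submodule.span_le]
      rintro x ⟨g, hg, w, hw, rfl⟩
      show ∀ j : ℤ, ∀ m ∈ FM j, ψ (g ⊗ₜ[A] w) m ∈ FN (j + n)
      intro j m hm
      rw [hψ, dualTensorHom_apply]
      by_cases hij : 0 < i + j
      · rw [hg j m hm hij]; simp
      · exact Submodule.smul_mem _ _ (hFN (by omega) hw)
    exact hle hyS
  · intro hf
    have hfH : f ∈ H := hf
    set t : ℕ := (l - k).toNat with ht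
    apply main t f hfH
    intro m hm
    have : FM (k + t) = ⊥ := hl _ (by omega)
    rw [this] at hm
    simp only [Submodule.mem_bot] at hm
    rw [hm]; simp
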